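/- Let $N \trianglelefteq G$, let $R \subseteq G$ satisfy $R = R^{-1}$, and let $A \subseteq G$ be nonempty and finite. For any $C > 0$: if $|AN/N \cap RN/N| \geq \frac{1}{C}|AN/N|$ (sizes computed in $G/N$), then $|A_3 \cap RN| \geq \frac{1}{C}|A|$, where $A_3 = \{g_1 g_2 g_3 : g_i \in A \cup A^{-1} \cup \{1\}\}$. -/

import Mathlib

open scoped Pointwise

theorem stmt_8 {G : Type*} [Group G] (N : Subgroup G) [N.Normal] (R A : Set G)
    (hR : R⁻¹ = R) (hA : A.Finite) (hne : A.Nonempty) (C : ℝ) (hC : 0 < C)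
    (h : ((((QuotientGroup.mk : G → G ⧸ N) '' A) ∩
          ((QuotientGroup.mk : G → G ⧸ N) '' R)).ncard : ℝ) ≥
        (1 / C) * (((QuotientGroup.mk : G → G ⧸ N) '' A).ncard : ℝ)) :
    ((((A ∪ A⁻¹ ∪ {1} : Set G) ^ 3) ∩ (R * (N : Set G))).ncard : ℝ) ≥
      (1 / C) * (A.ncard : ℝ) := by
  classical
  set π : G → G ⧸ N := QuotientGroup.mk with hπ
  set A' : Finset G := hA.toFinset with hA'
  have hA'A : (A' : Set G) = A := hA.coe_toFinset
  set B : Finset (G ⧸ N) := A'.image π with hB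
  have hBA : (B : Set (G ⧸ N)) = π '' A := by
    simp [hB, Finset.coe_image, hA'A]
  set S : Finset (G ⧸ N) := B.filter (fun q => q ∈ π '' R) with hS
  have hSset : (S : Set (G ⧸ N)) = (π '' A) ∩ (π '' R) := by
    ext q
    simp only [hS, Finset.coe_filter, Set.mem_setOf_eq, Finset.mem_coe, Set.mem_inter_iff]
    constructor
    · rintro ⟨hq, hq'⟩
      exact ⟨by rw [← hBA]; exact hq, hq'⟩
    · rintro ⟨hq, hq'⟩
      exact ⟨by rw [← Finset.mem_coe, hBA]; exact hq, hq'⟩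
  -- nonempty B, max fiber
  have hBne : B.Nonempty := by
    obtain ⟨a, ha⟩ := hne
    exact ⟨π a, Finset.mem_image.2 ⟨a, by rw [hA', Set.Finite.mem_toFinset]; exact ha, rfl⟩⟩
  obtain ⟨b₀, hb₀B, hmax⟩ := B.exists_max_image
    (fun b => (A'.filter (fun a => π a = b)).card) hBne
  set F : Finset G := A'.filter (fun a => π a = b₀) with hF
  set m : ℕ := F.card with hm
  obtain ⟨a₀, ha₀⟩ := Finset.mem_image.1 hb₀B
  have ha₀A : a₀ ∈ A := by rw [← hA'A]; exact ha₀.1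
  have hπa₀ : π a₀ = b₀ := ha₀.2
  -- |A| ≤ |B| * m
  have hcardA : A'.card ≤ B.card * m := by
    have h1 : A'.card = ∑ b ∈ B, (A'.filter (fun a => π a = b)).card :=
      Finset.card_eq_sum_card_fiberwise (fun x hx => Finset.mem_image.2 ⟨x, hx, rfl⟩)
    rw [h1]
    calc ∑ b ∈ B, (A'.filter (fun a => π a = b)).card
        ≤ ∑ _b ∈ B, m := Finset.sum_le_sum (fun b hb => hmax b hb)
      _ = B.card * m := by rw [Finset.sum_const, smul_eq_mul]
  -- section
  set f : G ⧸ N → G := fun q => if h : ∃ a, a ∈ A' ∧ π a = q then h.choose else 1 with hf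
  have hfspec : ∀ q ∈ B, f q ∈ A' ∧ π (f q) = q := by
    intro q hq
    have hex : ∃ a, a ∈ A' ∧ π a = q := by
      obtain ⟨a, ha, ha'⟩ := Finset.mem_image.1 hq
      exact ⟨a, ha, ha'⟩
    rw [hf]
    simp only [dif_pos hex]
    exact hex.choose_spec
  -- target finite
  set U : Set G := A ∪ A⁻¹ ∪ {1} with hU
  have hUfin : U.Finite := (hA.union hA.inv).union (Set.finite_singleton 1)
  have hU3 : U ^ 3 = U * U * U := by rw [pow_succ, sq]
  have hTfin : ((U ^ 3) ∩ (R * (N : Set G))).Finite := by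
    rw [hU3]; exact ((hUfin.mul hUfin).mul hUfin).inter_of_left _
  set T : Finset G := hTfin.toFinset with hT
  -- the map
  set φ : (G ⧸ N) × G → G := fun p => f p.1 * a₀⁻¹ * p.2 with hφ
  have hπφ : ∀ p : (G ⧸ N) × G, p.1 ∈ B → p.2 ∈ F → π (φ p) = p.1 := by
    rintro ⟨q, x⟩ hq hx
    have hfq := (hfspec q hq).2
    have hxb : π x = b₀ := (Finset.mem_filter.1 hx).2
    show π (f q * a₀⁻¹ * x) = q
    have : π (f q * a₀⁻¹ * x) = π (f q) * (π a₀)⁻¹ * π x := by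
      simp [hπ]
    rw [this, hfq, hπa₀, hxb, inv_mul_cancel_right]
  have hmaps : ∀ p ∈ S ×ˢ F, φ p ∈ T := by
    rintro ⟨q, x⟩ hp
    obtain ⟨hqS, hxF⟩ := Finset.mem_product.1 hp
    have hqB : q ∈ B := (Finset.mem_filter.1 hqS).1
    have hqR : q ∈ π '' R := (Finset.mem_filter.1 hqS).2
    have hxA : x ∈ A := by rw [← hA'A]; exact (Finset.mem_filter.1 hxF).1
    have hfqA : f q ∈ A := by rw [← hA'A]; exact (hfspec q hqB).1
    rw [hT, Set.Finite.mem_toFinset]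
    constructor
    · -- in U^3
      have h3 : U ^ 3 = U * U * U := by rw [pow_succ, sq]
      rw [h3]
      exact Set.mul_mem_mul (Set.mul_mem_mul (Or.inl (Or.inl hfqA))
        (Or.inl (Or.inr (Set.inv_mem_inv.2 ha₀A)))) (Or.inl (Or.inl hxA))
    · -- in R * N
      obtain ⟨r, hr, hrq⟩ := hqR
      have hπeq : π r = π (φ (q, x)) := by
        rw [hπφ (q, x) hqB hxF]; exact hrq
      have hmem : r⁻¹ * φ (q, x) ∈ N := by
        rwa [hπ, QuotientGroup.eq] at hπeq
      have : φ (q, x) = r * (r⁻¹ * φ (q, x)) := by group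
      rw [this]
      exact Set.mul_mem_mul hr hmem
  have hinj : Set.InjOn φ ((S ×ˢ F : Finset _) : Set _) := by
    rintro ⟨q, x⟩ hp ⟨q', x'⟩ hp' heq
    rw [Finset.mem_coe, Finset.mem_product] at hp hp'
    obtain ⟨hqS, hxF⟩ := hp
    obtain ⟨hqS', hxF'⟩ := hp'
    have hqB : q ∈ B := (Finset.mem_filter.1 hqS).1
    have hqB' : q' ∈ B := (Finset.mem_filter.1 hqS').1
    have hqq : q = q' := by
      have e1 : π (φ (q, x)) = q := hπφ (q, x) hqB hxF
      have e2 : π (φ (q', x')) = q' := hπφ (q', x') hqB' hxF'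
      rw [← e1, ← e2, heq]
    subst hqq
    have hxx : x = x' := by
      have : f q * a₀⁻¹ * x = f q * a₀⁻¹ * x' := heq
      exact mul_left_cancel this
    rw [hxx]
  have hcard : S.card * m ≤ T.card := by
    have := Finset.card_le_card_of_injOn φ (fun p hp => hmaps p hp) hinj
    rwa [Finset.card_product] at this
  -- assemble
  have hSncard : ((π '' A) ∩ (π '' R)).ncard = S.card := by
    rw [← hSset, Set.ncard_coe_finset]
  have hBncard : (π '' A).ncard = B.card := by
    rw [← hBA, Set.ncard_coe_finset]
  have hAncard : A.ncard = A'.card := by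
    rw [← hA'A, Set.ncard_coe_finset]
  rw [hπ] at hSncard hBncard
  rw [hSncard, hBncard] at h
  have goal_eq : ((U ^ 3) ∩ (R * (N : Set G))).ncard = T.card :=
    Set.ncard_eq_toFinset_card _ hTfin
  rw [goal_eq, hAncard]
  have hm0 : (0:ℝ) ≤ (m:ℝ) := Nat.cast_nonneg m
  have h1 : (A'.card : ℝ) ≤ (B.card : ℝ) * m := by exact_mod_cast hcardA
  have h2 : (S.card : ℝ) * m ≤ T.card := by exact_mod_cast hcard
  have hC' : (0:ℝ) < 1/C := by positivity
  calc (1/C) * (A'.card : ℝ) ≤ (1/C) * ((B.card : ℝ) * m) :=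
        mul_le_mul_of_nonneg_left h1 hC'.le
    _ = ((1/C) * (B.card : ℝ)) * m := by ring
    _ ≤ (S.card : ℝ) * m := mul_le_mul_of_nonneg_right h hm0
    _ ≤ (T.card : ℝ) := h2
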